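/- arXiv:1812.01572 — 3 statements merged into one kernel-verified Lean document; each statement's English description precedes it below -/
import Mathlib

section
/- Let a_0, a_1, N be integers with N > 0 and gcd(a_0, a_1, N) = 1. Then for every ε > 0 there exists a constant C (depending only on ε) such that there exists an integer p_1 with 0 ≤ p_1 ≤ C·N^ε and gcd(a_0 + a_1·p_1, N) = 1. -/
open Finset

lemma key (a₀ a₁ : ℤ) (n : ℕ) (hn : 0 < n)
    (h : Int.gcd a₀ (Int.gcd a₁ (n:ℤ)) = 1) (B : ℕ) (hB2 : 2 ≤ B)
    (hBn : n < B^(B+1)) :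
    ∃ p : ℕ, p ≤ (B+1)*4^B ∧ Int.gcd (a₀ + a₁ * (p:ℤ)) (n:ℤ) = 1 := by
  classical
  set small : Finset ℕ := n.primeFactors.filter (fun q => q ≤ B) with hsmall
  set large : Finset ℕ := n.primeFactors.filter (fun q => B < q) with hlarge
  set P : ℕ := ∏ q ∈ small, q with hP
  set P' : ℕ := ∏ q ∈ small.filter (fun q : ℕ => ¬ ((q : ℤ) ∣ a₀)), q with hP'
  set L : ℕ := large.card with hL
  -- basic facts about prime factors
  have hmem : ∀ q ∈ n.primeFactors, q.Prime ∧ q ∣ n := by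
    intro q hq
    exact ⟨Nat.prime_of_mem_primeFactors hq, Nat.dvd_of_mem_primeFactors hq⟩
  -- coprimality consequence
  have hcop : ∀ q : ℕ, q.Prime → q ∣ n → (q:ℤ) ∣ a₀ → (q:ℤ) ∣ a₁ → False := by
    intro q hq hqn hqa0 hqa1
    have h1 : (q:ℤ) ∣ (Int.gcd a₁ (n:ℤ) : ℤ) :=
      Int.dvd_coe_gcd hqa1 (Int.natCast_dvd_natCast.mpr hqn)
    have h2 : (q:ℤ) ∣ (Int.gcd a₀ (Int.gcd a₁ (n:ℤ)) : ℤ) := Int.dvd_coe_gcd hqa0 h1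
    rw [h] at h2
    have := Int.eq_one_of_dvd_one (by positivity) h2
    exact_mod_cast hq.one_lt.ne' (by exact_mod_cast this)
  -- no small prime divides P in ... rather: large primes do not divide P
  have hPdvd : ∀ q : ℕ, q.Prime → q ∣ P → q ≤ B := by
    intro q hq hqP
    obtain ⟨r, hr, hqr⟩ := hq.prime.exists_mem_finset_dvd hqP
    have hrmem := mem_filter.mp hr
    have : q = r := (Nat.prime_dvd_prime_iff_eq hq (hmem r hrmem.1).1).mp hqr
    omega
  -- Claim A : small primes never divide the expression
  have claimA : ∀ q ∈ small, ∀ k : ℕ, ¬ ((q:ℤ) ∣ a₀ + a₁ * ((P':ℤ) + k * P)) := by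
    intro q hq k hdvd
    have hqmem := mem_filter.mp hq
    have hqp := (hmem q hqmem.1).1
    have hqn := (hmem q hqmem.1).2
    have hqP : (q:ℤ) ∣ (P:ℤ) := Int.natCast_dvd_natCast.mpr (dvd_prod_of_mem _ hq)
    have hdvd' : (q:ℤ) ∣ a₀ + a₁ * (P':ℤ) := by
      have : a₀ + a₁ * ((P':ℤ) + k * P) = (a₀ + a₁ * (P':ℤ)) + (a₁ * k) * P := by ring
      rw [this] at hdvd
      exact (dvd_add_right (Dvd.dvd.mul_left hqP _)).mp (by rwa [add_comm] at hdvd)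
    by_cases hqa0 : (q:ℤ) ∣ a₀
    · -- then q ∤ a₁ and q ∤ P', but q ∣ a₁ * P'
      have hqa1P : (q:ℤ) ∣ a₁ * (P':ℤ) := (dvd_add_right hqa0).mp hdvd'
      rcases (Nat.prime_iff_prime_int.mp hqp).dvd_mul.mp hqa1P with h1 | h2
      · exact hcop q hqp hqn hqa0 h1
      · have hqP' : q ∣ P' := Int.natCast_dvd_natCast.mp h2
        obtain ⟨r, hr, hqr⟩ := hqp.prime.exists_mem_finset_dvd hqP'
        have hrmem := mem_filter.mp hr
        have : q = r :=
          (Nat.prime_dvd_prime_iff_eq hqp (hmem r (mem_filter.mp hrmem.1).1).1).mp hqr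
        subst this
        exact hrmem.2 hqa0
    · -- then q ∣ P', so q ∣ a₀
      have hqP' : (q:ℤ) ∣ (P':ℤ) := by
        refine Int.natCast_dvd_natCast.mpr (dvd_prod_of_mem _ ?_)
        exact mem_filter.mpr ⟨hq, hqa0⟩
      exact hqa0 ((dvd_add_left (Dvd.dvd.mul_left hqP' _)).mp (by rwa [add_comm] at hdvd'))
  -- large primes: also never divide when q ∣ a₁
  have claimA1 : ∀ q ∈ large, (q:ℤ) ∣ a₁ → ∀ k : ℕ,
      ¬ ((q:ℤ) ∣ a₀ + a₁ * ((P':ℤ) + k * P)) := by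
    intro q hq hqa1 k hdvd
    have hqmem := mem_filter.mp hq
    have hqa0 : (q:ℤ) ∣ a₀ := by
      have : (q:ℤ) ∣ a₁ * ((P':ℤ) + k * P) := Dvd.dvd.mul_right hqa1 _
      exact (dvd_add_right this).mp (by rwa [add_comm] at hdvd)
    exact hcop q (hmem q hqmem.1).1 (hmem q hqmem.1).2 hqa0 hqa1
  -- B^L ≤ n
  have hBLn : B ^ L ≤ n := by
    have hd : ∏ q ∈ large, q ∣ n :=
      dvd_trans (prod_dvd_prod_of_subset _ _ _ (filter_subset _ _))
        (Nat.prod_primeFactors_dvd n)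
    have h1 : B ^ L ≤ ∏ q ∈ large, q :=
      pow_card_le_prod _ _ _ (fun q hq => le_of_lt (mem_filter.mp hq).2)
    exact h1.trans (Nat.le_of_dvd hn hd)
  have hLB : L ≤ B := by
    by_contra hc
    push_neg at hc
    have : B ^ (B+1) ≤ B ^ L := Nat.pow_le_pow_right (by omega) (by omega)
    omega
  -- counting: find a good k
  have hgood : ∃ k ≤ L, ∀ q ∈ large, ¬ ((q:ℤ) ∣ a₀ + a₁ * ((P':ℤ) + k * P)) := by
    set bad : Finset ℕ :=
      (range (L+1)).filter (fun k => ∃ q ∈ large, (q:ℤ) ∣ a₀ + a₁ * ((P':ℤ) + k * P))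
      with hbad
    have hcard : bad.card ≤ L := by
      have : ∀ k ∈ bad, ∃ q ∈ large, (q:ℤ) ∣ a₀ + a₁ * ((P':ℤ) + k * P) := by
        intro k hk; exact (mem_filter.mp hk).2
      have hex : ∀ k : ℕ, ∃ q : ℕ, k ∈ bad → q ∈ large ∧ (q:ℤ) ∣ a₀ + a₁ * ((P':ℤ) + k * P) := by
        intro k
        by_cases hk : k ∈ bad
        · obtain ⟨q, hq1, hq2⟩ := (mem_filter.mp hk).2
          exact ⟨q, fun _ => ⟨hq1, hq2⟩⟩
        · exact ⟨0, fun hc => absurd hc hk⟩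
      choose f hf using hex
      have hinj : Set.InjOn f bad := by
        intro k hk k' hk' heq
        set q := f k with hq
        have hqmem := mem_filter.mp (hf k hk).1
        have hqp := (hmem q hqmem.1).1
        have hqB : B < q := hqmem.2
        have d1 := (hf k hk).2
        have d2 := (hf k' hk').2
        rw [← heq] at d2
        -- q does not divide a₁ (else claimA1-style contradiction)
        have hqa1 : ¬ ((q:ℤ) ∣ a₁) := fun hc =>
          claimA1 q (hf k hk).1 hc k d1
        have hqP : ¬ ((q:ℤ) ∣ (P:ℤ)) := by
          intro hc
          exact absurd (hPdvd q hqp (Int.natCast_dvd_natCast.mp hc)) (by omega)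
        have hdiff : (q:ℤ) ∣ a₁ * (P:ℤ) * ((k:ℤ) - k') := by
          have : a₁ * (P:ℤ) * ((k:ℤ) - k') =
              (a₀ + a₁ * ((P':ℤ) + k * P)) - (a₀ + a₁ * ((P':ℤ) + k' * P)) := by ring
          rw [this]
          exact dvd_sub d1 d2
        have hqIp := Nat.prime_iff_prime_int.mp hqp
        have hdk : (q:ℤ) ∣ ((k:ℤ) - k') := by
          rcases hqIp.dvd_mul.mp hdiff with h1 | h2
          · rcases hqIp.dvd_mul.mp h1 with h3 | h4
            · exact absurd h3 hqa1
            · exact absurd h4 hqP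
          · exact h2
        have hkL : k ≤ L := by
          have := (mem_filter.mp hk).1; exact Nat.lt_succ_iff.mp (mem_range.mp this)
        have hkL' : k' ≤ L := by
          have := (mem_filter.mp hk').1; exact Nat.lt_succ_iff.mp (mem_range.mp this)
        have habs : |(k:ℤ) - k'| < q := by
          rw [abs_sub_lt_iff]
          constructor <;> push_cast <;> omega
        have := Int.eq_zero_of_abs_lt_dvd hdk habs
        omega
      calc bad.card ≤ large.card :=
            card_le_card_of_injOn f (fun k hk => (hf k hk).1) hinj
        _ = L := rfl
    have : bad ≠ range (L+1) := by
      intro hc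
      have := card_range (L+1)
      rw [← hc] at this
      omega
    obtain ⟨k, hk1, hk2⟩ : ∃ k ∈ range (L+1), k ∉ bad := by
      by_contra hc
      push_neg at hc
      exact this (Finset.eq_of_subset_of_card_le (fun x hx => hc x hx)
        (by rw [card_range]; omega)).symm
    refine ⟨k, Nat.lt_succ_iff.mp (mem_range.mp hk1), ?_⟩
    intro q hq hdvd
    exact hk2 (mem_filter.mpr ⟨hk1, q, hq, hdvd⟩)
  obtain ⟨k, hkL, hk⟩ := hgood
  refine ⟨P' + k * P, ?_, ?_⟩
  · -- size bound
    have hP'P : P' ≤ P := by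
      apply prod_le_prod_of_subset_of_one_le' (filter_subset _ _)
      intro q hq _
      exact (hmem q (mem_filter.mp hq).1).1.one_lt.le
    have hP4 : P ≤ 4 ^ B := by
      have hsub : small ⊆ (range (B+1)).filter Nat.Prime := by
        intro q hq
        have hqmem := mem_filter.mp hq
        exact mem_filter.mpr ⟨mem_range.mpr (by omega), (hmem q hqmem.1).1⟩
      have : P ≤ primorial B := by
        apply prod_le_prod_of_subset_of_one_le' hsub
        intro q hq _
        exact (mem_filter.mp hq).2.one_lt.le
      exact this.trans (primorial_le_4_pow B)
    calc P' + k * P ≤ P + B * P := by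
          have : k * P ≤ B * P := Nat.mul_le_mul_right _ (hkL.trans hLB)
          omega
      _ = (B+1) * P := by ring
      _ ≤ (B+1) * 4^B := Nat.mul_le_mul_left _ hP4
  · -- gcd = 1
    by_contra hg
    have hgn : Int.gcd (a₀ + a₁ * ((P' + k * P : ℕ) : ℤ)) (n:ℤ) ≠ 0 := by
      intro hc
      rw [Int.gcd_eq_zero_iff] at hc
      exact hn.ne' (by exact_mod_cast hc.2)
    obtain ⟨q, hqp, hqd⟩ := Nat.exists_prime_and_dvd hg
    have hqn : q ∣ n := by
      have : (q:ℤ) ∣ (n:ℤ) := (Int.natCast_dvd_natCast.mpr hqd).trans (Int.gcd_dvd_right _ _)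
      exact_mod_cast this
    have hqe : (q:ℤ) ∣ a₀ + a₁ * ((P' + k * P : ℕ) : ℤ) :=
      (Int.natCast_dvd_natCast.mpr hqd).trans (Int.gcd_dvd_left _ _)
    have hqe' : (q:ℤ) ∣ a₀ + a₁ * ((P':ℤ) + k * P) := by
      push_cast at hqe ⊢; exact hqe
    have hqpf : q ∈ n.primeFactors := Nat.mem_primeFactors.mpr ⟨hqp, hqn, hn.ne'⟩
    by_cases hqB : q ≤ B
    · exact claimA q (mem_filter.mpr ⟨hqpf, hqB⟩) k hqe'
    · exact hk q (mem_filter.mpr ⟨hqpf, by omega⟩) hqe'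

/-- For integers `a₀, a₁, N` with `N > 0` and `gcd(a₀, a₁, N) = 1`, for every `ε > 0`
there is a constant `C = C(ε)` such that some integer `p₁` with `0 ≤ p₁ ≤ C·N^ε`
satisfies `gcd(a₀ + a₁·p₁, N) = 1`. -/
theorem stmt_0 :
    ∀ ε : ℝ, 0 < ε → ∃ C : ℝ, 0 < C ∧
      ∀ a₀ a₁ N : ℤ, 0 < N → Int.gcd a₀ (Int.gcd a₁ N : ℤ) = 1 →
        ∃ p₁ : ℤ, 0 ≤ p₁ ∧ (p₁ : ℝ) ≤ C * (N : ℝ) ^ ε ∧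
          Int.gcd (a₀ + a₁ * p₁) N = 1 := by
  intro ε hε
  set B₀ : ℕ := ⌈(8:ℝ)^(1/ε)⌉₊ + 2 with hB₀
  have h8 : (8:ℝ) ≤ (B₀:ℝ)^ε := by
    have h1 : (8:ℝ)^(1/ε) ≤ (B₀:ℝ) := by
      have := Nat.le_ceil ((8:ℝ)^(1/ε))
      push_cast [hB₀]
      linarith
    have h2 : ((8:ℝ)^(1/ε))^ε ≤ (B₀:ℝ)^ε :=
      Real.rpow_le_rpow (Real.rpow_nonneg (by norm_num) _) h1 hε.le
    rwa [← Real.rpow_mul (by norm_num), one_div_mul_cancel hε.ne', Real.rpow_one] at h2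
  refine ⟨((B₀+1) * 4^B₀ : ℕ), by positivity, ?_⟩
  intro a₀ a₁ N hN hgcd
  set n : ℕ := N.natAbs with hn
  have hnN : (n:ℤ) = N := Int.natAbs_of_nonneg hN.le
  have hn0 : 0 < n := by omega
  have hgcd' : Int.gcd a₀ (Int.gcd a₁ (n:ℤ)) = 1 := by rw [hnN]; exact hgcd
  have hBex : ∃ b : ℕ, 2 ≤ b ∧ n < b^(b+1) := by
    refine ⟨n + 2, by omega, ?_⟩
    calc n < n + 2 := by omega
      _ ≤ (n+2)^(n+2+1) := Nat.le_self_pow (by omega) _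
  set B : ℕ := Nat.find hBex with hB
  obtain ⟨hB2, hBn⟩ : 2 ≤ B ∧ n < B^(B+1) := Nat.find_spec hBex
  obtain ⟨p, hple, hpgcd⟩ := key a₀ a₁ n hn0 hgcd' B hB2 hBn
  refine ⟨(p:ℤ), by positivity, ?_, by rwa [hnN] at hpgcd⟩
  have hN1 : (1:ℝ) ≤ (N:ℝ) := by exact_mod_cast hN
  have hNε : (1:ℝ) ≤ (N:ℝ)^ε := Real.one_le_rpow hN1 hε.le
  have hCpos : (0:ℝ) < ((B₀+1) * 4^B₀ : ℕ) := by positivity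
  by_cases hBB : B ≤ B₀
  · -- small B case
    have h1 : p ≤ (B₀+1) * 4^B₀ := by
      refine hple.trans (Nat.mul_le_mul (by omega) (Nat.pow_le_pow_right (by omega) hBB))
    calc (p:ℝ) ≤ ((B₀+1) * 4^B₀ : ℕ) := by exact_mod_cast h1
      _ = ((B₀+1) * 4^B₀ : ℕ) * 1 := by ring
      _ ≤ ((B₀+1) * 4^B₀ : ℕ) * (N:ℝ)^ε := by
          exact mul_le_mul_of_nonneg_left hNε hCpos.le
  · -- large B case
    push_neg at hBB
    -- minimality of B gives n ≥ (B-1)^B ≥ B₀^B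
    have hmin : ¬ (2 ≤ B - 1 ∧ n < (B-1)^(B-1+1)) := Nat.find_min hBex (by omega)
    have hnlb : (B-1)^B ≤ n := by
      rcases not_and_or.mp hmin with h | h
      · omega
      · push_neg at h
        have : B - 1 + 1 = B := by omega
        rwa [this] at h
    have hnlb' : B₀^B ≤ n := le_trans (Nat.pow_le_pow_left (by omega) B) hnlb
    -- p ≤ 8^B
    have hp8 : p ≤ 8^B := by
      have h2B : B + 1 ≤ 2^B := Nat.lt_two_pow_self (n := B)
      calc p ≤ (B+1) * 4^B := hple
        _ ≤ 2^B * 4^B := Nat.mul_le_mul_right _ h2B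
        _ = 8^B := by rw [← Nat.mul_pow]
    -- 8^B ≤ N^ε
    have hkey : (8:ℝ)^B ≤ (N:ℝ)^ε := by
      have h1 : ((B₀:ℝ)^B : ℝ) ≤ (N:ℝ) := by
        rw [← hnN]
        exact_mod_cast hnlb'
      have h2 : ((B₀:ℝ)^B)^ε ≤ (N:ℝ)^ε :=
        Real.rpow_le_rpow (by positivity) h1 hε.le
      have h3 : ((B₀:ℝ)^B)^ε = ((B₀:ℝ)^ε)^B := by
        rw [← Real.rpow_natCast (B₀:ℝ) B, ← Real.rpow_mul (by positivity),
          mul_comm, Real.rpow_mul (by positivity), Real.rpow_natCast]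
      calc (8:ℝ)^B ≤ ((B₀:ℝ)^ε)^B := by
            exact pow_le_pow_left₀ (by norm_num) h8 B
        _ = ((B₀:ℝ)^B)^ε := h3.symm
        _ ≤ (N:ℝ)^ε := h2
    have hC1 : (1:ℝ) ≤ ((B₀+1) * 4^B₀ : ℕ) := by
      have h0 : 0 < (B₀+1) * 4^B₀ := by positivity
      exact_mod_cast Nat.succ_le_of_lt h0
    calc (p:ℝ) ≤ (8:ℝ)^B := by exact_mod_cast hp8
      _ ≤ (N:ℝ)^ε := hkey
      _ = 1 * (N:ℝ)^ε := by ring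
      _ ≤ ((B₀+1) * 4^B₀ : ℕ) * (N:ℝ)^ε := by
          exact mul_le_mul_of_nonneg_right hC1 (by positivity)
end

section
/- Let D be a quaternion division algebra over Q and let L ⊆ D be a subset closed under multiplication containing 1. Fix an embedding ι of D into M_2(R) (assuming D is indefinite), a point z in the upper half plane, a positive integer L_0, and δ > 0. Define L(m; z, δ) as the set of α ∈ L with reduced norm m and hyperbolic distance u(z, ι(α)·z) ≤ δ. Then the Q-algebra generated by the union of L(m; z, δ) over 1 ≤ m ≤ L_0 is contained in the Q-vector space spanned by the union of L(m; z, 2δ) over 1 ≤ m ≤ L_0². -/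
open Matrix MatrixGroups
open scoped Pointwise

set_option synthInstance.maxHeartbeats 400000 in
theorem glpos_dist_smul (g : GL(2, ℝ)⁺) (w w' : UpperHalfPlane) :
    dist (g • w) (g • w') = dist w w' := by
  obtain ⟨A, hA⟩ : ∃ A : SL(2, ℝ), ∀ x : UpperHalfPlane, (A : GL(2, ℝ)⁺) • x = g • x := by
    set M : Matrix (Fin 2) (Fin 2) ℝ := ((g : GL (Fin 2) ℝ) : Matrix (Fin 2) (Fin 2) ℝ) with hM
    have hdet : 0 < M.det := g.prop
    set r : ℝ := (Real.sqrt M.det)⁻¹ with hr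
    have hrpos : 0 < r := inv_pos.mpr (Real.sqrt_pos.mpr hdet)
    have hdet1 : (r • M).det = 1 := by
      rw [Matrix.det_smul]
      simp only [Fintype.card_fin]
      rw [hr, inv_pow, Real.sq_sqrt hdet.le]
      field_simp
    refine ⟨⟨r • M, hdet1⟩, fun x => ?_⟩
    set A : SL(2, ℝ) := ⟨r • M, hdet1⟩ with hA
    apply UpperHalfPlane.ext
    rw [Subgroup.smul_def, Subgroup.smul_def, UpperHalfPlane.coe_smul_of_det_pos ((Matrix.mem_glpos _).mp (Subtype.prop _)),
      UpperHalfPlane.coe_smul_of_det_pos ((Matrix.mem_glpos _).mp (Subtype.prop _))]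
    have hmat : ((((A : GL(2, ℝ)⁺) : GL (Fin 2) ℝ)) : Matrix (Fin 2) (Fin 2) ℝ) = r • M := rfl
    have hnum : UpperHalfPlane.num (A : GL(2, ℝ)⁺) x = (r : ℂ) * UpperHalfPlane.num g x := by
      simp only [UpperHalfPlane.num, hmat, Matrix.smul_apply, smul_eq_mul, Complex.ofReal_mul, hM]
      ring
    have hden : UpperHalfPlane.denom (A : GL(2, ℝ)⁺) x = (r : ℂ) * UpperHalfPlane.denom g x := by
      simp only [UpperHalfPlane.denom, hmat, Matrix.smul_apply, smul_eq_mul, Complex.ofReal_mul, hM]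
      ring
    rw [hnum, hden, mul_div_mul_left]
    exact_mod_cast hrpos.ne'
  rw [← hA, ← hA]
  have h2 : ∀ x : UpperHalfPlane, (A : GL(2, ℝ)⁺) • x = A • x := fun _ => rfl
  rw [h2, h2, dist_smul]

set_option synthInstance.maxHeartbeats 400000 in
theorem dist_mul_le (g₁ g₂ : GL(2, ℝ)⁺) (z : UpperHalfPlane) (δ : ℝ)
    (hd₁ : dist z (g₁ • z) ≤ δ) (hd₂ : dist z (g₂ • z) ≤ δ) :
    dist z ((g₁ * g₂) • z) ≤ 2 * δ := by
  calc dist z ((g₁ * g₂) • z)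
      ≤ dist z (g₁ • z) + dist (g₁ • z) ((g₁ * g₂) • z) := dist_triangle _ _ _
    _ = dist z (g₁ • z) + dist z (g₂ • z) := by rw [mul_smul, glpos_dist_smul]
    _ ≤ δ + δ := add_le_add hd₁ hd₂
    _ = 2 * δ := by ring

theorem quat_triple_eq (c₁ c₂ : ℚ) (x y z : QuaternionAlgebra ℚ c₁ 0 c₂) :
    x*y*z = (1/2 : ℚ) • (
      ((2*z.re) • (x*y) + (2*(x*y).re) • z
        + (2*((x*y)*z).re - 4*(x*y).re*z.re) • (1 : QuaternionAlgebra ℚ c₁ 0 c₂))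
      - ((2*y.re) • (z*x) + (2*(z*x).re) • y
        + (2*((z*x)*y).re - 4*(z*x).re*y.re) • (1 : QuaternionAlgebra ℚ c₁ 0 c₂))
      + ((2*x.re) • (y*z) + (2*(y*z).re) • x
        + (2*((y*z)*x).re - 4*(y*z).re*x.re) • (1 : QuaternionAlgebra ℚ c₁ 0 c₂))) := by
  cases x; cases y; cases z
  ext <;>
    simp [QuaternionAlgebra.mk_mul_mk, smul_eq_mul] <;> ring

theorem quat_triple_mem {c₁ c₂ : ℚ} (V : Submodule ℚ (QuaternionAlgebra ℚ c₁ 0 c₂))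
    {x y z : QuaternionAlgebra ℚ c₁ 0 c₂}
    (h1 : (1 : QuaternionAlgebra ℚ c₁ 0 c₂) ∈ V) (hx : x ∈ V) (hy : y ∈ V) (hz : z ∈ V)
    (hxy : x*y ∈ V) (hzx : z*x ∈ V) (hyz : y*z ∈ V) : x*y*z ∈ V := by
  rw [quat_triple_eq]
  exact V.smul_mem _ (add_mem (sub_mem
    (add_mem (add_mem (V.smul_mem _ hxy) (V.smul_mem _ hz)) (V.smul_mem _ h1))
    (add_mem (add_mem (V.smul_mem _ hzx) (V.smul_mem _ hy)) (V.smul_mem _ h1)))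
    (add_mem (add_mem (V.smul_mem _ hyz) (V.smul_mem _ hx)) (V.smul_mem _ h1)))


set_option synthInstance.maxHeartbeats 400000 in
/-- Let `D` be an indefinite quaternion division algebra over `ℚ`, embedded in `M₂(ℝ)` via
`ι`, and let `L ⊆ D` be multiplicatively closed with `1 ∈ L`. Then the `ℚ`-algebra
generated by `⋃_{1 ≤ m ≤ L₀} L(m; z, δ)` is contained in the `ℚ`-span of
`⋃_{1 ≤ m ≤ L₀²} L(m; z, 2δ)`, where `L(m; z, δ)` is the set of `α ∈ L` of reduced norm
`m` with `u(z, ι(α)z) ≤ δ`. -/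
theorem stmt_4 (c₁ c₂ : ℚ)
    (hdiv : ∀ x : QuaternionAlgebra ℚ c₁ 0 c₂, x ≠ 0 → IsUnit x)
    (ι : QuaternionAlgebra ℚ c₁ 0 c₂ →+* Matrix (Fin 2) (Fin 2) ℝ)
    (hι : Function.Injective ι)
    (L : Set (QuaternionAlgebra ℚ c₁ 0 c₂))
    (h1 : (1 : QuaternionAlgebra ℚ c₁ 0 c₂) ∈ L)
    (hmul : ∀ x ∈ L, ∀ y ∈ L, x * y ∈ L)
    (z : UpperHalfPlane) (L₀ : ℕ) (hL₀ : 0 < L₀) (δ : ℝ) (hδ : 0 < δ) :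
    ∀ x ∈ Algebra.adjoin ℚ
        {α : QuaternionAlgebra ℚ c₁ 0 c₂ | α ∈ L ∧ ∃ m : ℕ, 1 ≤ m ∧ m ≤ L₀ ∧
          α * star α = (m : QuaternionAlgebra ℚ c₁ 0 c₂) ∧
          ∃ g : GL(2, ℝ)⁺, (↑(↑g : GL (Fin 2) ℝ) : Matrix (Fin 2) (Fin 2) ℝ) = ι α ∧
            dist z (g • z) ≤ δ},
      x ∈ Submodule.span ℚ
        {α : QuaternionAlgebra ℚ c₁ 0 c₂ | α ∈ L ∧ ∃ m : ℕ, 1 ≤ m ∧ m ≤ L₀ ^ 2 ∧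
          α * star α = (m : QuaternionAlgebra ℚ c₁ 0 c₂) ∧
          ∃ g : GL(2, ℝ)⁺, (↑(↑g : GL (Fin 2) ℝ) : Matrix (Fin 2) (Fin 2) ℝ) = ι α ∧
            dist z (g • z) ≤ 2 * δ} := by
  set S : Set (QuaternionAlgebra ℚ c₁ 0 c₂) := {α : QuaternionAlgebra ℚ c₁ 0 c₂ | α ∈ L ∧ ∃ m : ℕ, 1 ≤ m ∧ m ≤ L₀ ∧
          α * star α = (m : QuaternionAlgebra ℚ c₁ 0 c₂) ∧
          ∃ g : GL(2, ℝ)⁺, (↑(↑g : GL (Fin 2) ℝ) : Matrix (Fin 2) (Fin 2) ℝ) = ι α ∧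
            dist z (g • z) ≤ δ} with hS
  set T : Set (QuaternionAlgebra ℚ c₁ 0 c₂) := {α : QuaternionAlgebra ℚ c₁ 0 c₂ | α ∈ L ∧ ∃ m : ℕ, 1 ≤ m ∧ m ≤ L₀ ^ 2 ∧
          α * star α = (m : QuaternionAlgebra ℚ c₁ 0 c₂) ∧
          ∃ g : GL(2, ℝ)⁺, (↑(↑g : GL (Fin 2) ℝ) : Matrix (Fin 2) (Fin 2) ℝ) = ι α ∧
            dist z (g • z) ≤ 2 * δ} with hT
  -- 1 ∈ S
  have hS1 : (1 : QuaternionAlgebra ℚ c₁ 0 c₂) ∈ S := by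
    refine ⟨h1, 1, le_refl _, hL₀, by simp, 1, ?_, ?_⟩
    · simp [_root_.map_one]
    · simp [hδ.le]
  -- products of two elements of S lie in T
  have hST : ∀ a ∈ S, ∀ b ∈ S, a * b ∈ T := by
    rintro a ⟨haL, m₁, hm₁1, hm₁L, hn₁, g₁, hg₁, hd₁⟩ b ⟨hbL, m₂, hm₂1, hm₂L, hn₂, g₂, hg₂, hd₂⟩
    refine ⟨hmul a haL b hbL, m₁ * m₂, Nat.one_le_iff_ne_zero.mpr ?_, ?_, ?_, g₁ * g₂, ?_, ?_⟩
    · positivity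
    · rw [sq]; exact Nat.mul_le_mul hm₁L hm₂L
    · have : a * b * star (a * b) = (m₂ : QuaternionAlgebra ℚ c₁ 0 c₂) * (m₁ : QuaternionAlgebra ℚ c₁ 0 c₂) := by
        rw [StarMul.star_mul]
        have h' : a * b * (star b * star a) = a * (b * star b) * star a := by
          simp only [mul_assoc]
        rw [h', hn₂, ← (Nat.cast_commute m₂ a).eq, mul_assoc, hn₁]
      rw [this, Nat.cast_mul, (Nat.cast_commute (m₂ : ℕ) ((m₁ : ℕ) : QuaternionAlgebra ℚ c₁ 0 c₂)).eq]
    · have : ((↑(g₁ * g₂) : GL (Fin 2) ℝ) : Matrix (Fin 2) (Fin 2) ℝ)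
          = ((↑g₁ : GL (Fin 2) ℝ) : Matrix (Fin 2) (Fin 2) ℝ)
            * ((↑g₂ : GL (Fin 2) ℝ) : Matrix (Fin 2) (Fin 2) ℝ) := rfl
      rw [this, hg₁, hg₂, ← _root_.map_mul]
    · exact dist_mul_le g₁ g₂ z δ hd₁ hd₂
  -- the span of S*S
  set V : Submodule ℚ (QuaternionAlgebra ℚ c₁ 0 c₂) := Submodule.span ℚ (S * S) with hV
  have hSSV : ∀ a ∈ S, ∀ b ∈ S, a * b ∈ V :=
    fun a ha b hb => Submodule.subset_span (Set.mul_mem_mul ha hb)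
  have h1V : (1 : QuaternionAlgebra ℚ c₁ 0 c₂) ∈ V := by simpa using hSSV 1 hS1 1 hS1
  have hSV : ∀ a ∈ S, a ∈ V := fun a ha => by simpa using hSSV a ha 1 hS1
  have htriple : ∀ a ∈ S, ∀ b ∈ S, ∀ c ∈ S, a * b * c ∈ V := fun a ha b hb c hc =>
    quat_triple_mem V h1V (hSV a ha) (hSV b hb) (hSV c hc)
      (hSSV a ha b hb) (hSSV c hc a ha) (hSSV b hb c hc)
  have hquad : ∀ a ∈ S, ∀ b ∈ S, ∀ c ∈ S, ∀ d ∈ S, (a * b) * (c * d) ∈ V := by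
    intro a ha b hb c hc d hd
    refine quat_triple_mem V h1V (hSV a ha) (hSV b hb) (hSSV c hc d hd)
      (hSSV a ha b hb) (htriple c hc d hd a ha) ?_
    rw [← mul_assoc]
    exact htriple b hb c hc d hd
  have hVmulV : ∀ u ∈ V, ∀ v ∈ V, u * v ∈ V := by
    have hle : V * V ≤ V := by
      rw [hV, Submodule.span_mul_span, Submodule.span_le]
      rintro w ⟨p, ⟨a, ha, b, hb, rfl⟩, q, ⟨c, hc, d, hd, rfl⟩, rfl⟩
      exact hquad a ha b hb c hc d hd
    exact fun u hu v hv => hle (Submodule.mul_mem_mul hu hv)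
  -- adjoin S ≤ V
  intro x hx
  have hxV : x ∈ V := by
    refine Algebra.adjoin_induction ?_ ?_ ?_ ?_ hx
    · exact fun s hs => hSV s hs
    · intro r
      rw [Algebra.algebraMap_eq_smul_one]
      exact V.smul_mem r h1V
    · exact fun _ _ _ _ hu hv => add_mem hu hv
    · exact fun _ _ _ _ hu hv => hVmulV _ hu _ hv
  -- V ≤ span T
  have hVT : V ≤ Submodule.span ℚ T := by
    rw [hV, Submodule.span_le]
    rintro w ⟨a, ha, b, hb, rfl⟩
    exact Submodule.subset_span (hST a ha b hb)
  exact hVT hxV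
end

section
/- Let L ⊆ R² be a lattice and D ⊂ R² a disc of radius R. If λ_1 is the length of the shortest nonzero vector of L and d is the covolume of L, then the number of lattice points of L in D is O(1 + R/λ_1 + R²/d), with an absolute implied constant. -/
private lemma icc_card_le_real (lo hi : ℝ) (h : lo ≤ hi) :
    ((Finset.Icc ⌈lo⌉ ⌊hi⌋).card : ℝ) ≤ hi - lo + 1 := by
  rw [Int.card_Icc]
  rcases le_or_gt (⌈lo⌉ : ℤ) (⌊hi⌋ + 1) with hc | hc
  · have ht : ((⌊hi⌋ + 1 - ⌈lo⌉).toNat : ℤ) = ⌊hi⌋ + 1 - ⌈lo⌉ :=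
      Int.toNat_of_nonneg (by omega)
    have h1 : (⌊hi⌋ : ℝ) ≤ hi := Int.floor_le hi
    have h2 : lo ≤ (⌈lo⌉ : ℝ) := Int.le_ceil lo
    have ht' := congrArg (fun z : ℤ => (z : ℝ)) ht
    push_cast at ht'
    linarith
  · have ht : (⌊hi⌋ + 1 - ⌈lo⌉ : ℤ).toNat = 0 := by omega
    rw [ht]
    push_cast
    linarith

private lemma icc_card_le_real' (t : ℝ) (h : 0 ≤ t) :
    ((Finset.Icc ⌊-t⌋ ⌊t⌋).card : ℝ) ≤ 2 * t + 2 := by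
  rw [Int.card_Icc]
  have h1 : (⌊t⌋ : ℝ) ≤ t := Int.floor_le t
  have h2 : -t - 1 < (⌊-t⌋ : ℝ) := by
    have := Int.lt_floor_add_one (-t); linarith
  have hmono : ⌊-t⌋ ≤ ⌊t⌋ := Int.floor_le_floor (by linarith)
  have hnn : (0:ℤ) ≤ ⌊t⌋ + 1 - ⌊-t⌋ := by omega
  have ht := congrArg (fun z : ℤ => (z : ℝ)) (Int.toNat_of_nonneg hnn)
  push_cast at ht
  linarith

private lemma normsq_eq (z : EuclideanSpace ℝ (Fin 2)) : ‖z‖ ^ 2 = z 0 ^ 2 + z 1 ^ 2 := by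
  rw [EuclideanSpace.norm_eq, Real.sq_sqrt (by positivity)]
  simp [Fin.sum_univ_two, Real.norm_eq_abs, sq_abs]

private lemma abs_le_of_sq (a b : ℝ) (hb : 0 ≤ b) (h : a ^ 2 ≤ b ^ 2) : |a| ≤ b := by
  have := Real.sqrt_le_sqrt h
  rwa [Real.sqrt_sq_eq_abs, Real.sqrt_sq hb] at this

set_option maxHeartbeats 1000000 in
/-- Lattice point count in a disc: if `L ⊆ ℝ²` is a lattice with shortest nonzero vector
of length `λ₁` and covolume `d`, and `D` is a disc of radius `R`, then
`|L ∩ D| = O(1 + R/λ₁ + R²/d)` with an absolute implied constant. -/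
theorem stmt_7 :
    ∃ C : ℝ, 0 < C ∧
      ∀ (v w p : EuclideanSpace ℝ (Fin 2)) (R lam d : ℝ),
        LinearIndependent ℝ ![v, w] → 0 ≤ R →
        (∀ x ∈ Submodule.span ℤ ({v, w} : Set (EuclideanSpace ℝ (Fin 2))),
          x ≠ 0 → lam ≤ ‖x‖) →
        (∃ x ∈ Submodule.span ℤ ({v, w} : Set (EuclideanSpace ℝ (Fin 2))),
          x ≠ 0 ∧ ‖x‖ = lam) →
        d = |v 0 * w 1 - v 1 * w 0| →
        (({x : EuclideanSpace ℝ (Fin 2) |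
            x ∈ Submodule.span ℤ ({v, w} : Set (EuclideanSpace ℝ (Fin 2))) ∧
            ‖x - p‖ ≤ R}).ncard : ℝ) ≤ C * (1 + R / lam + R ^ 2 / d) := by
  refine ⟨12, by norm_num, ?_⟩
  intro v w p R lam d hind hR hmin hex hd
  obtain ⟨x₀, hx₀mem, hx₀ne, hx₀norm⟩ := hex
  set L := Submodule.span ℤ ({v, w} : Set (EuclideanSpace ℝ (Fin 2))) with hLdef
  set S := {x : EuclideanSpace ℝ (Fin 2) | x ∈ L ∧ ‖x - p‖ ≤ R} with hSdef
  have hlam : 0 < lam := hx₀norm ▸ norm_pos_iff.mpr hx₀ne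
  -- the determinant is nonzero
  have hD : v 0 * w 1 - v 1 * w 0 ≠ 0 := by
    intro h0
    rw [LinearIndependent.pair_iff] at hind
    have e1 : (w 1) • v + (-(v 1)) • w = 0 := by
      ext i
      fin_cases i <;>
        simp only [PiLp.add_apply, PiLp.smul_apply, smul_eq_mul, PiLp.zero_apply]
      · show w 1 * v 0 + -(v 1) * w 0 = 0
        linarith
      · show w 1 * v 1 + -(v 1) * w 1 = 0
        ring
    obtain ⟨hw1, hv1'⟩ := hind _ _ e1
    have hv1 : v 1 = 0 := by linarith [neg_eq_zero.mp hv1']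
    have e2 : (w 0) • v + (-(v 0)) • w = 0 := by
      ext i
      fin_cases i <;>
        simp only [PiLp.add_apply, PiLp.smul_apply, smul_eq_mul, PiLp.zero_apply]
      · show w 0 * v 0 + -(v 0) * w 0 = 0
        ring
      · show w 0 * v 1 + -(v 0) * w 1 = 0
        rw [hv1, hw1]; ring
    obtain ⟨hw0, hv0'⟩ := hind _ _ e2
    have hv0 : v 0 = 0 := by linarith [neg_eq_zero.mp hv0']
    have e3 : (1:ℝ) • v + (0:ℝ) • w = 0 := by
      ext i
      fin_cases i <;>
        simp only [PiLp.add_apply, PiLp.smul_apply, smul_eq_mul, PiLp.zero_apply]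
      · show 1 * v 0 + 0 * w 0 = 0
        rw [hv0]; ring
      · show 1 * v 1 + 0 * w 1 = 0
        rw [hv1]; ring
    exact one_ne_zero (hind _ _ e3).1
  have hd0 : 0 < d := by rw [hd]; exact abs_pos.mpr hD
  -- coordinates of the shortest vector
  obtain ⟨a, b, hab⟩ := Submodule.mem_span_pair.mp hx₀mem
  have habc : ∀ i, x₀ i = (a : ℝ) * v i + (b : ℝ) * w i := by
    intro i
    have h := congrArg (fun z => z i) hab
    simp only [PiLp.add_apply, PiLp.smul_apply, zsmul_eq_mul] at h
    linarith [h]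
  -- Lagrange identity
  have hnx₀ : x₀ 0 ^ 2 + x₀ 1 ^ 2 = lam ^ 2 := by
    rw [← hx₀norm, normsq_eq]
  have key : ∀ z : EuclideanSpace ℝ (Fin 2),
      (x₀ 0 * z 0 + x₀ 1 * z 1) ^ 2 + (x₀ 0 * z 1 - x₀ 1 * z 0) ^ 2 = lam ^ 2 * ‖z‖ ^ 2 := by
    intro z
    rw [normsq_eq, ← hnx₀]; ring
  -- integrality of the cross coordinate
  have hint : ∀ x ∈ L, ∃ k : ℤ,
      x₀ 0 * x 1 - x₀ 1 * x 0 = (k : ℝ) * (v 0 * w 1 - v 1 * w 0) := by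
    intro x hx
    obtain ⟨m, n, hmn⟩ := Submodule.mem_span_pair.mp hx
    have hxc : ∀ i, x i = (m : ℝ) * v i + (n : ℝ) * w i := by
      intro i
      have h := congrArg (fun z => z i) hmn
      simp only [PiLp.add_apply, PiLp.smul_apply, zsmul_eq_mul] at h
      linarith [h]
    refine ⟨n * a - m * b, ?_⟩
    rw [habc 0, habc 1, hxc 0, hxc 1]
    push_cast
    ring
  -- cross / dot bounds against the norm
  have crossB : ∀ z : EuclideanSpace ℝ (Fin 2), ‖z‖ ≤ R →
      |x₀ 0 * z 1 - x₀ 1 * z 0| ≤ lam * R := by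
    intro z hz
    refine abs_le_of_sq _ _ (mul_nonneg hlam.le hR) ?_
    have hk := key z
    have h1 : ‖z‖ ^ 2 ≤ R ^ 2 := by nlinarith [norm_nonneg z]
    nlinarith [sq_nonneg (x₀ 0 * z 0 + x₀ 1 * z 1), sq_nonneg lam]
  have dotB : ∀ z : EuclideanSpace ℝ (Fin 2), ‖z‖ ≤ R →
      |x₀ 0 * z 0 + x₀ 1 * z 1| ≤ lam * R := by
    intro z hz
    refine abs_le_of_sq _ _ (mul_nonneg hlam.le hR) ?_
    have hk := key z
    have h1 : ‖z‖ ^ 2 ≤ R ^ 2 := by nlinarith [norm_nonneg z]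
    nlinarith [sq_nonneg (x₀ 0 * z 1 - x₀ 1 * z 0), sq_nonneg lam]
  -- the injection into a product of integer intervals
  set cp : ℝ := x₀ 0 * p 1 - x₀ 1 * p 0 with hcp
  set Dt : ℝ := v 0 * w 1 - v 1 * w 0 with hDt
  set Φ : EuclideanSpace ℝ (Fin 2) → ℤ × ℤ := fun x =>
    (⌊(x₀ 0 * x 1 - x₀ 1 * x 0) / Dt⌋,
     ⌊(x₀ 0 * (x 0 - p 0) + x₀ 1 * (x 1 - p 1)) / lam ^ 2⌋) with hΦ
  set A : Finset ℤ := Finset.Icc ⌈cp / Dt - lam * R / d⌉ ⌊cp / Dt + lam * R / d⌋ with hA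
  set B : Finset ℤ := Finset.Icc ⌊-(R / lam)⌋ ⌊R / lam⌋ with hB
  have subapply : ∀ (x : EuclideanSpace ℝ (Fin 2)) (i : Fin 2), (x - p) i = x i - p i := by
    intro x i; rfl
  have hmaps : ∀ x ∈ S, Φ x ∈ (↑(A ×ˢ B) : Set (ℤ × ℤ)) := by
    intro x hx
    obtain ⟨hxL, hxR⟩ := hx
    obtain ⟨k, hk⟩ := hint x hxL
    have hcB := crossB (x - p) hxR
    have hdB := dotB (x - p) hxR
    rw [subapply, subapply] at hcB hdB
    -- cross bound gives bound on k
    have hkb : |(k : ℝ) * Dt - cp| ≤ lam * R := by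
      have : (k : ℝ) * Dt - cp = x₀ 0 * (x 1 - p 1) - x₀ 1 * (x 0 - p 0) := by
        rw [← hk, hcp]; ring
      rw [this]
      calc |x₀ 0 * (x 1 - p 1) - x₀ 1 * (x 0 - p 0)|
          = |x₀ 0 * ((x - p) 1) - x₀ 1 * ((x - p) 0)| := by rw [subapply, subapply]
        _ ≤ lam * R := by rw [subapply, subapply]; exact hcB
    have hkabs : |(k : ℝ) - cp / Dt| ≤ lam * R / d := by
      have hrw : (k : ℝ) - cp / Dt = ((k : ℝ) * Dt - cp) / Dt := by
        field_simp
      rw [hrw, abs_div, hd]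
      exact (div_le_div_iff_of_pos_right (abs_pos.mpr hD)).mpr hkb
    have hk1 : cp / Dt - lam * R / d ≤ (k : ℝ) := by
      have := abs_le.mp hkabs; linarith [this.1]
    have hk2 : (k : ℝ) ≤ cp / Dt + lam * R / d := by
      have := abs_le.mp hkabs; linarith [this.2]
    -- dot bound gives bound on j
    have hj : |(x₀ 0 * (x 0 - p 0) + x₀ 1 * (x 1 - p 1)) / lam ^ 2| ≤ R / lam := by
      rw [abs_div, abs_of_pos (pow_pos hlam 2)]
      have h2 : lam * R / lam ^ 2 = R / lam := by
        field_simp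
      calc |x₀ 0 * (x 0 - p 0) + x₀ 1 * (x 1 - p 1)| / lam ^ 2
          ≤ lam * R / lam ^ 2 :=
            (div_le_div_iff_of_pos_right (pow_pos hlam 2)).mpr hdB
        _ = R / lam := h2
    have hj' := abs_le.mp hj
    have hfl : ⌊(x₀ 0 * x 1 - x₀ 1 * x 0) / Dt⌋ = k := by
      rw [hk, mul_div_assoc, div_self hD, mul_one, Int.floor_intCast]
    simp only [Finset.coe_product, Set.mem_prod, Finset.mem_coe, hA, hB, Finset.mem_Icc]
    constructor
    · simp only [hΦ]
      rw [hfl]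
      exact ⟨Int.ceil_le.mpr hk1, Int.le_floor.mpr hk2⟩
    · exact ⟨Int.floor_le_floor hj'.1, Int.floor_le_floor hj'.2⟩
  have hinj : Set.InjOn Φ S := by
    intro x hx y hy hxy
    by_contra hne
    obtain ⟨hxL, hxR⟩ := hx
    obtain ⟨hyL, hyR⟩ := hy
    obtain ⟨kx, hkx⟩ := hint x hxL
    obtain ⟨ky, hky⟩ := hint y hyL
    have hk1 : ⌊(x₀ 0 * x 1 - x₀ 1 * x 0) / Dt⌋ = kx := by
      rw [hkx, mul_div_assoc, div_self hD, mul_one, Int.floor_intCast]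
    have hk2 : ⌊(x₀ 0 * y 1 - x₀ 1 * y 0) / Dt⌋ = ky := by
      rw [hky, mul_div_assoc, div_self hD, mul_one, Int.floor_intCast]
    have hkeq : kx = ky := by
      have h1 := congrArg Prod.fst hxy
      simp only [hΦ] at h1
      rw [hk1, hk2] at h1; exact h1
    have hcross0 : x₀ 0 * ((x - y) 1) - x₀ 1 * ((x - y) 0) = 0 := by
      have hxy' : ∀ i : Fin 2, (x - y) i = x i - y i := fun i => rfl
      rw [hxy' 0, hxy' 1]
      have : x₀ 0 * x 1 - x₀ 1 * x 0 = x₀ 0 * y 1 - x₀ 1 * y 0 := by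
        rw [hkx, hky, hkeq]
      linarith [this]
    have hzL : x - y ∈ L := Submodule.sub_mem L hxL hyL
    have hzne : x - y ≠ 0 := sub_ne_zero.mpr hne
    have hznorm : lam ≤ ‖x - y‖ := hmin _ hzL hzne
    have hkey := key (x - y)
    rw [hcross0] at hkey
    have hsq : lam ^ 2 ≤ ‖x - y‖ ^ 2 := by nlinarith [hznorm, hlam]
    have hsq2 : lam ^ 2 * lam ^ 2 ≤ lam ^ 2 * ‖x - y‖ ^ 2 :=
      mul_le_mul_of_nonneg_left hsq (sq_nonneg lam)
    have hdot2 : (x₀ 0 * ((x - y) 0) + x₀ 1 * ((x - y) 1)) ^ 2 ≥ (lam ^ 2) ^ 2 := by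
      nlinarith [hkey, hsq2]
    have hdotabs : lam ^ 2 ≤ |x₀ 0 * ((x - y) 0) + x₀ 1 * ((x - y) 1)| := by
      nlinarith [abs_nonneg (x₀ 0 * ((x - y) 0) + x₀ 1 * ((x - y) 1)),
        sq_abs (x₀ 0 * ((x - y) 0) + x₀ 1 * ((x - y) 1)), hlam]
    -- but floors of the second coordinates agree
    set jx : ℝ := (x₀ 0 * (x 0 - p 0) + x₀ 1 * (x 1 - p 1)) / lam ^ 2 with hjx
    set jy : ℝ := (x₀ 0 * (y 0 - p 0) + x₀ 1 * (y 1 - p 1)) / lam ^ 2 with hjy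
    have hjfloor : ⌊jx⌋ = ⌊jy⌋ := by
      have := congrArg Prod.snd hxy
      simpa only [hΦ] using this
    have hdiff : jx - jy = (x₀ 0 * ((x - y) 0) + x₀ 1 * ((x - y) 1)) / lam ^ 2 := by
      have hxy' : ∀ i : Fin 2, (x - y) i = x i - y i := fun i => rfl
      rw [hjx, hjy, hxy' 0, hxy' 1]
      field_simp
      ring
    have habs1 : 1 ≤ |jx - jy| := by
      rw [hdiff, abs_div, abs_of_pos (pow_pos hlam 2)]
      rw [le_div_iff₀ (pow_pos hlam 2)]
      linarith [hdotabs]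
    have hlt : |jx - jy| < 1 := by
      rw [abs_lt]
      constructor
      · have h1 : (⌊jx⌋ : ℝ) ≤ jx := Int.floor_le jx
        have h2 : jy < ⌊jy⌋ + 1 := Int.lt_floor_add_one jy
        rw [← hjfloor] at h2
        linarith
      · have h1 : (⌊jy⌋ : ℝ) ≤ jy := Int.floor_le jy
        have h2 : jx < ⌊jx⌋ + 1 := Int.lt_floor_add_one jx
        rw [hjfloor] at h2
        linarith
    linarith
  -- finiteness and the cardinality bound
  have himg : Φ '' S ⊆ ↑(A ×ˢ B) := by
    rintro _ ⟨x, hx, rfl⟩; exact hmaps x hx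
  have hfin : S.Finite :=
    Set.Finite.of_finite_image ((A ×ˢ B).finite_toSet.subset himg) hinj
  have hcard : S.ncard ≤ (A ×ˢ B).card := by
    rw [← Set.ncard_coe_finset]
    exact Set.ncard_le_ncard_of_injOn Φ hmaps hinj (A ×ˢ B).finite_toSet
  have hlrd : (0:ℝ) ≤ lam * R / d := div_nonneg (mul_nonneg hlam.le hR) hd0.le
  have hcA : (A.card : ℝ) ≤ 2 * (lam * R / d) + 1 := by
    have hle : cp / Dt - lam * R / d ≤ cp / Dt + lam * R / d := by linarith
    have := icc_card_le_real _ _ hle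
    rw [hA]
    linarith
  have hcB' : (B.card : ℝ) ≤ 2 * (R / lam) + 2 := by
    have := icc_card_le_real' (R / lam) (div_nonneg hR hlam.le)
    rw [hB]
    linarith
  have hprod : ((A ×ˢ B).card : ℝ) = (A.card : ℝ) * (B.card : ℝ) := by
    rw [Finset.card_product]; push_cast; ring
  have hN : (S.ncard : ℝ) ≤ (2 * (lam * R / d) + 1) * (2 * (R / lam) + 2) := by
    calc (S.ncard : ℝ) ≤ ((A ×ˢ B).card : ℝ) := by exact_mod_cast hcard
      _ = (A.card : ℝ) * (B.card : ℝ) := hprod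
      _ ≤ (2 * (lam * R / d) + 1) * (2 * (R / lam) + 2) :=
          mul_le_mul hcA hcB' (Nat.cast_nonneg _) (by linarith)
  have hRlam : (0:ℝ) ≤ R / lam := div_nonneg hR hlam.le
  have hRd : (0:ℝ) ≤ R ^ 2 / d := div_nonneg (sq_nonneg R) hd0.le
  rcases le_or_gt S.ncard 1 with hc | hc
  · have : (S.ncard : ℝ) ≤ 1 := by exact_mod_cast hc
    linarith
  · obtain ⟨x, y, hxS, hyS, hne⟩ := (Set.one_lt_ncard_iff hfin).mp hc
    have hzL : x - y ∈ L := Submodule.sub_mem L hxS.1 hyS.1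
    have hzne : x - y ≠ 0 := sub_ne_zero.mpr hne
    have hznorm : lam ≤ ‖x - y‖ := hmin _ hzL hzne
    have h2R : lam ≤ 2 * R := by
      have h1 : ‖x - y‖ = ‖(x - p) - (y - p)‖ := by rw [sub_sub_sub_cancel_right]
      have h2 : ‖(x - p) - (y - p)‖ ≤ ‖x - p‖ + ‖y - p‖ := norm_sub_le _ _
      have := hxS.2
      have := hyS.2
      linarith [hznorm, h1 ▸ hznorm]
    have hexp : (2 * (lam * R / d) + 1) * (2 * (R / lam) + 2)
        = 4 * (R ^ 2 / d) + 4 * (lam * R / d) + 2 * (R / lam) + 2 := by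
      field_simp
      ring
    have hbd : 4 * (lam * R / d) ≤ 8 * (R ^ 2 / d) := by
      have h1 : 4 * (lam * R) ≤ 8 * R ^ 2 := by nlinarith
      calc 4 * (lam * R / d) = (4 * (lam * R)) / d := by ring
        _ ≤ (8 * R ^ 2) / d := (div_le_div_iff_of_pos_right hd0).mpr h1
        _ = 8 * (R ^ 2 / d) := by ring
    linarith [hN, hexp ▸ hN]
end
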